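/- Let r ∈ (0, +∞) and let x ∈ K{X/r} be such that ∂_X(x) = u·x for some u ∈ K{X/r}. Then either x = 0 or x is a unit of the ring K{X/r}. Similarly, if x ∈ K[[X/r]]_0 and ∂_X(x) = u·x for some u ∈ K[[X/r]]_0, then either x = 0 or x is a unit of the ring K[[X/r]]_0. -/

import Mathlib

open scoped Classical
noncomputable section

namespace Ohkubo

/-- A derivation on a field: additive and satisfying the Leibniz rule. -/
structure IsDerivation {K : Type} [Field K] (d : K → K) : Prop where
  map_add : ∀ x y : K, d (x + y) = d x + d y
  leibniz : ∀ x y : K, d (x * y) = d x * y + x * d y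

/-- A map bounded for the norm. -/
def IsBoundedMap {K : Type} [NontriviallyNormedField K] (d : K → K) : Prop :=
  ∃ C : ℝ, ∀ x : K, ‖d x‖ ≤ C * ‖x‖

/-- Operator norm of a map with respect to a norm-like function `N`. -/
def opNormOn {V : Type} [Zero V] (N : V → ℝ) (f : V → V) : ℝ :=
  sSup {t : ℝ | ∃ v : V, v ≠ 0 ∧ t = N (f v) / N v}

/-- Spectral norm of a map with respect to a norm-like function `N`. -/
def spNormOn {V : Type} [Zero V] (N : V → ℝ) (f : V → V) : ℝ :=
  sInf {t : ℝ | ∃ n : ℕ, 1 ≤ n ∧ t = (opNormOn N (f^[n])) ^ ((n : ℝ)⁻¹)}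

/-- The residue characteristic `p(K)`: the unique prime `p` with `‖p‖ < 1`, if it exists,
and `0` otherwise. -/
def residueChar (K : Type) [NontriviallyNormedField K] : ℕ :=
  if h : ∃ p : ℕ, p.Prime ∧ ‖(p : K)‖ < 1 then h.choose else 0

/-- `ω(K) = |p(K)|^(1/(p(K)-1))` if `p(K) > 0`, and `1` otherwise. -/
def omegaK (K : Type) [NontriviallyNormedField K] : ℝ :=
  if residueChar K = 0 then 1
  else ‖((residueChar K : ℕ) : K)‖ ^ (((residueChar K : ℝ) - 1)⁻¹)

/-- The spectral norm of a map `K → K`, computed with the norm of `K`. -/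
def spNormK {K : Type} [NontriviallyNormedField K] (d : K → K) : ℝ :=
  spNormOn (fun x : K => ‖x‖) d

/-- `r(K,∂) = ω(K)/|∂|_sp`. -/
def radius {K : Type} [NontriviallyNormedField K] (d : K → K) : ℝ :=
  omegaK K / spNormK d

/-- The `i`-th term `‖a_i‖ s^i` entering the `s`-Gauss norm. -/
def gaussTerm {K : Type} [NontriviallyNormedField K] (s : ℝ) (f : PowerSeries K) (i : ℕ) : ℝ :=
  ‖(PowerSeries.coeff i) f‖ * s ^ i

/-- `|f|_s < ∞`. -/
def MemBd {K : Type} [NontriviallyNormedField K] (s : ℝ) (f : PowerSeries K) : Prop :=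
  BddAbove (Set.range (gaussTerm s f))

/-- `K[[X/s]]_0`, the power series with bounded `s`-Gauss norm. -/
def bdRing (K : Type) [NontriviallyNormedField K] (s : ℝ) : Set (PowerSeries K) :=
  {f | MemBd s f}

/-- `K{X/r}`, the power series convergent on the open disc of radius `r`. -/
def convRing (K : Type) [NontriviallyNormedField K] (r : ℝ) : Set (PowerSeries K) :=
  {f | ∀ s : ℝ, 0 < s → s < r → MemBd s f}

/-- The formal derivative `∂_X` of a power series. -/
def dX {K : Type} [Field K] (f : PowerSeries K) : PowerSeries K :=
  PowerSeries.mk fun i => ((i : K) + 1) * (PowerSeries.coeff (i + 1)) f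

/-- The Taylor map `g_0(c) = Σ_i (∂^i(c)/i!) X^i`. -/
def taylor {K : Type} [Field K] (d : K → K) (c : K) : PowerSeries K :=
  PowerSeries.mk fun i => d^[i] c / (i.factorial : K)

/-- A (nonarchimedean, multiplicatively compatible) norm on a `K`-vector space. -/
def CompatNorm (K : Type) {V : Type} [NontriviallyNormedField K] [AddCommGroup V] [Module K V]
    (N : V → ℝ) : Prop :=
  (∀ v : V, 0 ≤ N v) ∧ (∀ v : V, N v = 0 ↔ v = 0) ∧
    (∀ x y : V, N (x + y) ≤ max (N x) (N y)) ∧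
    ∀ (c : K) (v : V), N (c • v) = ‖c‖ * N v

/-- The spectral norm of `f` equals `c` (computed with any compatible norm; the value is
independent of the choice). -/
def HasSpNorm (K : Type) {V : Type} [NontriviallyNormedField K] [AddCommGroup V] [Module K V]
    (f : V → V) (c : ℝ) : Prop :=
  ∃ N : V → ℝ, CompatNorm K N ∧ spNormOn N f = c

/-- A differential operator on `V` relative to the derivation `d`. -/
def IsDiffOp {K V : Type} [NontriviallyNormedField K] [AddCommGroup V] [Module K V]
    (d : K → K) (D : V → V) : Prop :=
  (∀ x y : V, D (x + y) = D x + D y) ∧ ∀ (c : K) (v : V), D (c • v) = d c • v + c • D v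

/-- `(V, D)` is an irreducible differential module. -/
def IsIrred (K : Type) (V : Type) [NontriviallyNormedField K] [AddCommGroup V] [Module K V]
    (D : V → V) : Prop :=
  (∃ v : V, v ≠ 0) ∧ ∀ p : Submodule K V, (∀ x ∈ p, D x ∈ p) → p = ⊥ ∨ p = ⊤

/-- `DW` is the operator induced by `D` on the subquotient `q ⧸ p`. -/
def InducedOn {K V : Type} [NontriviallyNormedField K] [AddCommGroup V] [Module K V]
    (D : V → V) (p q : Submodule K V)
    (DW : (↥q ⧸ p.comap q.subtype) → (↥q ⧸ p.comap q.subtype)) : Prop :=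
  ∀ (x : V) (hx : x ∈ q) (hDx : D x ∈ q),
    DW (Submodule.Quotient.mk ⟨x, hx⟩) = Submodule.Quotient.mk ⟨D x, hDx⟩

/-- Every irreducible subquotient of `(V, D)` has spectral norm `c`. -/
def PureRadius (K : Type) (V : Type) [NontriviallyNormedField K] [AddCommGroup V] [Module K V]
    (D : V → V) (c : ℝ) : Prop :=
  ∀ p q : Submodule K V, p ≤ q → (∀ x ∈ p, D x ∈ p) → (∀ x ∈ q, D x ∈ q) →
    ∀ DW : (↥q ⧸ p.comap q.subtype) → (↥q ⧸ p.comap q.subtype),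
      InducedOn D p q DW → IsIrred K (↥q ⧸ p.comap q.subtype) DW → HasSpNorm K DW c

/-- `V_r`: the sum of all `D`-stable subspaces all of whose irreducible subquotients have
spectral norm `ω(K)/r`. -/
def pureSub (K : Type) {V : Type} [NontriviallyNormedField K] [AddCommGroup V] [Module K V]
    (D : V → V) (r : ℝ) : Submodule K V :=
  sSup {p : Submodule K V | ∃ hp : ∀ x ∈ p, D x ∈ p,
    PureRadius K ↥p (fun y : ↥p => (⟨D y.1, hp y.1 y.2⟩ : ↥p)) (omegaK K / r)}

/-- `V_{r_J}`: the sum of all subspaces stable under all the `D j` all of whose irreducible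
`D j`-subquotients have spectral norm `ω(K)/r_j`, for every `j`. -/
def pureSubFam (K : Type) {V J : Type} [NontriviallyNormedField K] [AddCommGroup V] [Module K V]
    (D : J → V → V) (rJ : J → ℝ) : Submodule K V :=
  sSup {p : Submodule K V | ∃ hp : ∀ (j : J), ∀ x ∈ p, D j x ∈ p,
    ∀ j : J, PureRadius K ↥p (fun y : ↥p => (⟨D j y.1, hp j y.1 y.2⟩ : ↥p)) (omegaK K / rJ j)}

/-- A solution map: an additive map `V → K[[X]]` semilinear for the Taylor map and
intertwining `D` with `∂_X`. -/
def IsSolMap {K V : Type} [NontriviallyNormedField K] [AddCommGroup V] [Module K V]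
    (d : K → K) (D : V → V) (s : V → PowerSeries K) : Prop :=
  (∀ x y : V, s (x + y) = s x + s y) ∧
    (∀ (c : K) (v : V), s (c • v) = taylor d c * s v) ∧
    ∀ v : V, s (D v) = dX (s v)

/-- `y` is a unit of the (sub)ring determined by the subset `S` of `K[[X]]`. -/
def UnitIn {K : Type} [NontriviallyNormedField K] (S : Set (PowerSeries K))
    (y : PowerSeries K) : Prop :=
  y ∈ S ∧ ∃ z ∈ S, y * z = 1 ∧ z * y = 1

/-! ### Auxiliary lemmas for Statement 6 -/

section DXLemmas

variable {K : Type} [Field K]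

lemma coeff_dX (f : PowerSeries K) (n : ℕ) :
    (PowerSeries.coeff n) (dX f) = ((n : K) + 1) * (PowerSeries.coeff (n + 1)) f := by
  simp [dX, PowerSeries.coeff_mk]

lemma dX_eq_derivative (f : PowerSeries K) : dX f = PowerSeries.derivative K f := by
  ext n
  rw [coeff_dX, PowerSeries.coeff_derivative]
  push_cast
  ring

lemma dX_mul (f g : PowerSeries K) : dX (f * g) = dX f * g + f * dX g := by
  rw [dX_eq_derivative, dX_eq_derivative, dX_eq_derivative, Derivation.leibniz,
    smul_eq_mul, smul_eq_mul]
  ring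

/-- The sequence `u_k` with `∂^k x = u_k · x`. -/
def wSeq (u : PowerSeries K) : ℕ → PowerSeries K
  | 0 => 1
  | k + 1 => dX (wSeq u k) + wSeq u k * u

lemma dX_iterate_eq_wSeq {x u : PowerSeries K} (hde : dX x = u * x) :
    ∀ k : ℕ, dX^[k] x = wSeq u k * x
  | 0 => by simp [wSeq]
  | (k + 1) => by
    rw [Function.iterate_succ_apply', dX_iterate_eq_wSeq hde k, dX_mul, hde, wSeq]
    ring

lemma coeff_dX_iterate (x : PowerSeries K) :
    ∀ (N m : ℕ), (PowerSeries.coeff m) (dX^[N] x)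
      = (((m + N).descFactorial N : ℕ) : K) * (PowerSeries.coeff (m + N)) x
  | 0, m => by simp
  | (N + 1), m => by
    have hidx : m + 1 + N = m + (N + 1) := by omega
    rw [Function.iterate_succ_apply', coeff_dX, coeff_dX_iterate x N (m + 1), hidx]
    have h : ((m + (N + 1)).descFactorial (N + 1) : ℕ)
        = (m + 1) * ((m + (N + 1)).descFactorial N) := by
      rw [Nat.descFactorial_succ]
      congr 1
      omega
    rw [h]
    push_cast
    ring

lemma const_coeff_ne_zero [CharZero K] {x u : PowerSeries K}
    (hde : dX x = u * x) (hxne : x ≠ 0) : (PowerSeries.coeff 0) x ≠ 0 := by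
  classical
  have hex : ∃ n, (PowerSeries.coeff n) x ≠ 0 := by
    by_contra h
    push_neg at h
    exact hxne (PowerSeries.ext fun n => by simpa using h n)
  have hmin : ∀ m, m < Nat.find hex → (PowerSeries.coeff m) x = 0 := by
    intro m hm
    by_contra h
    exact Nat.find_min hex hm h
  have hnne := Nat.find_spec hex
  rcases Nat.eq_zero_or_pos (Nat.find hex) with h0 | hpos
  · rwa [h0] at hnne
  · exfalso
    obtain ⟨m, hm⟩ : ∃ m, Nat.find hex = m + 1 := ⟨Nat.find hex - 1, by omega⟩
    have h1 : (PowerSeries.coeff m) (dX x)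
        = ((m : K) + 1) * (PowerSeries.coeff (m + 1)) x := coeff_dX x m
    have h2 : (PowerSeries.coeff m) (u * x) = 0 := by
      rw [PowerSeries.coeff_mul]
      apply Finset.sum_eq_zero
      rintro ⟨a, b⟩ hp
      rw [Finset.HasAntidiagonal.mem_antidiagonal] at hp
      have hb : (PowerSeries.coeff b) x = 0 := hmin b (by omega)
      rw [hb, mul_zero]
    rw [hde, h2] at h1
    have hmne : ((m : K) + 1) ≠ 0 := Nat.cast_add_one_ne_zero m
    have : (PowerSeries.coeff (m + 1)) x = 0 := by
      rcases mul_eq_zero.mp h1.symm with h | h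
      · exact absurd h hmne
      · exact h
    rw [hm] at hnne
    exact hnne this

end DXLemmas

section AuxLemmas

variable {K : Type} [NontriviallyNormedField K]

/-- Coefficientwise bound for the `s`-Gauss norm. -/
def Bnd (s : ℝ) (f : PowerSeries K) (C : ℝ) : Prop :=
  ∀ i : ℕ, ‖(PowerSeries.coeff i) f‖ * s ^ i ≤ C

lemma memBd_iff {s : ℝ} {f : PowerSeries K} : MemBd s f ↔ ∃ C, Bnd s f C := by
  constructor
  · rintro ⟨C, hC⟩
    exact ⟨C, fun i => hC ⟨i, rfl⟩⟩
  · rintro ⟨C, hC⟩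
    refine ⟨C, ?_⟩
    rintro y ⟨i, rfl⟩
    exact hC i

lemma Bnd.nonneg {s : ℝ} {f : PowerSeries K} {C : ℝ} (h : Bnd s f C) : 0 ≤ C :=
  le_trans (by positivity) (h 0)

lemma Bnd.mono {f : PowerSeries K} {a b C : ℝ} (ha : 0 ≤ a) (hab : a ≤ b)
    (h : Bnd b f C) : Bnd a f C := fun i =>
  le_trans (mul_le_mul_of_nonneg_left (pow_le_pow_left₀ ha hab i) (norm_nonneg _)) (h i)

lemma na_natCast_le_one (hna : IsNonarchimedean fun x : K => ‖x‖) (n : ℕ) :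
    ‖(n : K)‖ ≤ 1 := by
  induction n with
  | zero => simp
  | succ n ih =>
    push_cast
    refine le_trans (hna (n : K) 1) ?_
    simp only [norm_one]
    exact max_le ih le_rfl

lemma na_sum_le (hna : IsNonarchimedean fun x : K => ‖x‖)
    {ι : Type} (S : Finset ι) (F : ι → K) {M : ℝ} (hM : 0 ≤ M)
    (h : ∀ i ∈ S, ‖F i‖ ≤ M) : ‖∑ i ∈ S, F i‖ ≤ M := by
  classical
  induction S using Finset.cons_induction with
  | empty => simpa using hM
  | cons a s ha ih =>
    rw [Finset.sum_cons]
    exact le_trans (hna _ _) (max_le (h a (Finset.mem_cons_self a s))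
      (ih fun i hi => h i (Finset.mem_cons_of_mem hi)))

lemma na_sum_lt (hna : IsNonarchimedean fun x : K => ‖x‖)
    {ι : Type} (S : Finset ι) (F : ι → K) {M : ℝ} (hM : 0 < M)
    (h : ∀ i ∈ S, ‖F i‖ < M) : ‖∑ i ∈ S, F i‖ < M := by
  classical
  induction S using Finset.cons_induction with
  | empty => simpa using hM
  | cons a s ha ih =>
    rw [Finset.sum_cons]
    exact lt_of_le_of_lt (hna _ _) (max_lt (h a (Finset.mem_cons_self a s))
      (ih fun i hi => h i (Finset.mem_cons_of_mem hi)))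

lemma na_norm_add_ge (hna : IsNonarchimedean fun x : K => ‖x‖)
    {a b : K} (h : ‖b‖ < ‖a‖) : ‖a‖ ≤ ‖a + b‖ := by
  have h2 : ‖a‖ ≤ max ‖a + b‖ ‖-b‖ := by
    have := hna (a + b) (-b)
    simpa using this
  rw [norm_neg] at h2
  rcases max_cases ‖a + b‖ ‖b‖ with ⟨he, _⟩ | ⟨he, _⟩ <;> rw [he] at h2
  · exact h2
  · linarith

lemma norm_descFactorial_le (hna : IsNonarchimedean fun x : K => ‖x‖) (m N : ℕ) :
    ‖(((m + N).descFactorial N : ℕ) : K)‖ ≤ ‖((N.factorial : ℕ) : K)‖ := by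
  rw [Nat.descFactorial_eq_factorial_mul_choose, Nat.cast_mul, norm_mul]
  exact mul_le_of_le_one_right (norm_nonneg _) (na_natCast_le_one hna _)

lemma Bnd.mul (hna : IsNonarchimedean fun x : K => ‖x‖)
    {a : ℝ} (ha : 0 < a) {f g : PowerSeries K} {C D : ℝ}
    (hf : Bnd a f C) (hg : Bnd a g D) : Bnd a (f * g) (C * D) := by
  intro n
  rw [PowerSeries.coeff_mul]
  have han : (0 : ℝ) < a ^ n := pow_pos ha n
  rw [← le_div_iff₀ han]
  apply na_sum_le hna
  · exact div_nonneg (mul_nonneg hf.nonneg hg.nonneg) han.le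
  · rintro ⟨i, j⟩ hp
    rw [Finset.HasAntidiagonal.mem_antidiagonal] at hp
    rw [norm_mul]
    have h1 : ‖(PowerSeries.coeff i) f‖ ≤ C / a ^ i := by
      rw [le_div_iff₀ (pow_pos ha i)]; exact hf i
    have h2 : ‖(PowerSeries.coeff j) g‖ ≤ D / a ^ j := by
      rw [le_div_iff₀ (pow_pos ha j)]; exact hg j
    calc ‖(PowerSeries.coeff i) f‖ * ‖(PowerSeries.coeff j) g‖
        ≤ (C / a ^ i) * (D / a ^ j) :=
          mul_le_mul h1 h2 (norm_nonneg _) (div_nonneg hf.nonneg (pow_pos ha i).le)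
      _ = C * D / a ^ n := by rw [div_mul_div_comm, ← pow_add, hp]

lemma Bnd.add (hna : IsNonarchimedean fun x : K => ‖x‖)
    {a : ℝ} (ha : 0 ≤ a) {f g : PowerSeries K} {C D : ℝ}
    (hf : Bnd a f C) (hg : Bnd a g D) : Bnd a (f + g) (max C D) := by
  intro n
  have han : (0:ℝ) ≤ a ^ n := pow_nonneg ha n
  rw [map_add]
  refine le_trans (mul_le_mul_of_nonneg_right (hna _ _) han) ?_
  rw [max_mul_of_nonneg _ _ han]
  exact max_le_max (hf n) (hg n)

lemma Bnd.one {a : ℝ} (ha : 0 ≤ a) : Bnd a (1 : PowerSeries K) 1 := by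
  intro i
  rw [PowerSeries.coeff_one]
  rcases Nat.eq_zero_or_pos i with h | h
  · subst h
    simp
  · rw [if_neg (by omega : ¬ i = 0)]
    rw [norm_zero, zero_mul]
    norm_num

lemma Bnd.dX_same (hna : IsNonarchimedean fun x : K => ‖x‖)
    {a : ℝ} (ha : 0 < a) {f : PowerSeries K} {C : ℝ}
    (h : Bnd a f C) : Bnd a (dX f) (C / a) := by
  intro i
  rw [coeff_dX, norm_mul]
  have h1 : ‖((i : K) + 1)‖ ≤ 1 := by
    have := na_natCast_le_one hna (i + 1)
    push_cast at this
    exact this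
  have h2 : ‖(PowerSeries.coeff (i + 1)) f‖ * a ^ i ≤ C / a := by
    rw [le_div_iff₀ ha]
    calc ‖(PowerSeries.coeff (i + 1)) f‖ * a ^ i * a
        = ‖(PowerSeries.coeff (i + 1)) f‖ * a ^ (i + 1) := by ring
      _ ≤ C := h (i + 1)
  calc ‖((i : K) + 1)‖ * ‖(PowerSeries.coeff (i + 1)) f‖ * a ^ i
      ≤ 1 * (‖(PowerSeries.coeff (i + 1)) f‖ * a ^ i) := by
        rw [mul_assoc]
        exact mul_le_mul_of_nonneg_right h1 (by positivity)
    _ = ‖(PowerSeries.coeff (i + 1)) f‖ * a ^ i := one_mul _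
    _ ≤ C / a := h2

lemma wSeq_bnd (hna : IsNonarchimedean fun x : K => ‖x‖)
    {r : ℝ} {u : PowerSeries K}
    (hu : ∀ a : ℝ, 0 < a → a < r → ∃ C, Bnd a u C) (k : ℕ) :
    ∀ a : ℝ, 0 < a → a < r → ∃ C, Bnd a (wSeq u k) C := by
  induction k with
  | zero => exact fun a ha har => ⟨1, Bnd.one ha.le⟩
  | succ k ih =>
    intro a ha har
    obtain ⟨C, hC⟩ := ih a ha har
    obtain ⟨Cu, hCu⟩ := hu a ha har
    refine ⟨max (C / a) (C * Cu), ?_⟩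
    show Bnd a (dX (wSeq u k) + wSeq u k * u) _
    exact Bnd.add hna ha.le (Bnd.dX_same hna ha hC) (Bnd.mul hna ha hC hCu)

lemma term_decay {f : PowerSeries K} {b C : ℝ} (hb : 0 < b) (h : Bnd b f C)
    {t : ℝ} (ht : 0 ≤ t) (j : ℕ) :
    ‖(PowerSeries.coeff j) f‖ * t ^ j ≤ C * (t / b) ^ j := by
  have heq : ‖(PowerSeries.coeff j) f‖ * t ^ j
      = (‖(PowerSeries.coeff j) f‖ * b ^ j) * (t / b) ^ j := by
    rw [div_pow]
    field_simp
  rw [heq]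
  exact mul_le_mul_of_nonneg_right (h j) (by positivity)

lemma exists_argmax {d : ℕ → ℝ} {C q : ℝ} (hq0 : 0 ≤ q) (hq1 : q < 1)
    (hd : ∀ j, d j ≤ C * q ^ j) {j1 : ℕ} (hj1 : 0 < d j1) :
    ∃ J, (∀ j, d j ≤ d J) ∧ ∀ j, J < j → d j < d J := by
  classical
  have htend : Filter.Tendsto (fun j : ℕ => C * q ^ j) Filter.atTop (nhds 0) := by
    simpa using (tendsto_pow_atTop_nhds_zero_of_lt_one hq0 hq1).const_mul C
  have hev : ∀ᶠ j in Filter.atTop, C * q ^ j < d j1 := htend.eventually_lt_const hj1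
  obtain ⟨M, hM⟩ := Filter.eventually_atTop.mp hev
  have hMlt : ∀ j, M ≤ j → d j < d j1 := fun j hj => lt_of_le_of_lt (hd j) (hM j hj)
  have hj1M : j1 < M := by
    by_contra h
    push_neg at h
    exact absurd (hMlt j1 h) (lt_irrefl _)
  have hne : (Finset.range M).Nonempty := ⟨j1, Finset.mem_range.mpr hj1M⟩
  set D := (Finset.range M).sup' hne d with hD
  have hj1le : d j1 ≤ D := Finset.le_sup' d (Finset.mem_range.mpr hj1M)
  have hT : ((Finset.range M).filter (fun j => d j = D)).Nonempty := by
    obtain ⟨j, hjmem, hje⟩ := Finset.exists_mem_eq_sup' hne d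
    exact ⟨j, Finset.mem_filter.mpr ⟨hjmem, hje.symm⟩⟩
  set J := ((Finset.range M).filter (fun j => d j = D)).max' hT with hJ
  have hJmem := ((Finset.range M).filter (fun j => d j = D)).max'_mem hT
  rw [Finset.mem_filter] at hJmem
  have hdJ : d J = D := hJmem.2
  refine ⟨J, ?_, ?_⟩
  · intro j
    rcases lt_or_ge j M with hj | hj
    · rw [hdJ]
      exact Finset.le_sup' d (Finset.mem_range.mpr hj)
    · exact le_of_lt (lt_of_lt_of_le (hMlt j hj) (hj1le.trans hdJ.symm.le))
  · intro j hJj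
    rcases lt_or_ge j M with hj | hj
    · have hle : d j ≤ D := Finset.le_sup' d (Finset.mem_range.mpr hj)
      rcases eq_or_lt_of_le hle with he | hlt
      · exfalso
        have : j ≤ J := Finset.le_max' _ j
          (Finset.mem_filter.mpr ⟨Finset.mem_range.mpr hj, he⟩)
        omega
      · rw [hdJ]; exact hlt
    · rw [hdJ]
      exact lt_of_lt_of_le (hMlt j hj) hj1le

lemma eq_of_two_pow_eq {a b t1 t2 : ℝ} {n m : ℕ} (hnm : n < m)
    (h1 : 0 < t1) (h2 : 0 < t2)
    (e1 : a * t1 ^ n = b * t1 ^ m) (e2 : a * t2 ^ n = b * t2 ^ m)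
    (hne : a * t1 ^ n ≠ 0) : t1 = t2 := by
  have ha : a ≠ 0 := fun h => hne (by simp [h])
  have hb : b ≠ 0 := by
    intro h
    rw [h, zero_mul] at e1
    exact hne e1
  have key : ∀ t : ℝ, 0 < t → a * t ^ n = b * t ^ m → t ^ (m - n) = a / b := by
    intro t ht he
    have htn : t ^ n ≠ 0 := (pow_pos ht n).ne'
    have h3 : b * t ^ (m - n) * t ^ n = a * t ^ n := by
      rw [mul_assoc, ← pow_add, Nat.sub_add_cancel hnm.le]
      exact he.symm
    have h4 : a = b * t ^ (m - n) := (mul_right_cancel₀ htn h3).symm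
    rw [h4]
    field_simp
  have hp : t1 ^ (m - n) = t2 ^ (m - n) := (key t1 h1 e1).trans (key t2 h2 e2).symm
  have hmn : m - n ≠ 0 := by omega
  exact pow_left_strictMonoOn₀ hmn |>.injOn (Set.mem_setOf_eq ▸ h1.le)
    (Set.mem_setOf_eq ▸ h2.le) hp

lemma exists_good_t (x : PowerSeries K) {t0 s : ℝ} (h0 : 0 < t0) (hts : t0 < s) :
    ∃ t, t0 < t ∧ t < s ∧ ∀ n m : ℕ, n ≠ m →
      ‖(PowerSeries.coeff n) x‖ * t ^ n = ‖(PowerSeries.coeff m) x‖ * t ^ m →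
      ‖(PowerSeries.coeff n) x‖ * t ^ n = 0 := by
  classical
  set Bad : ℕ × ℕ → Set ℝ := fun p =>
    {t | t0 < t ∧ t < s ∧ p.1 ≠ p.2 ∧
      ‖(PowerSeries.coeff p.1) x‖ * t ^ p.1 = ‖(PowerSeries.coeff p.2) x‖ * t ^ p.2 ∧
      ‖(PowerSeries.coeff p.1) x‖ * t ^ p.1 ≠ 0} with hBad
  have hsub : ∀ p, (Bad p).Subsingleton := by
    rintro ⟨n, m⟩ t1 ht1 t2 ht2
    obtain ⟨ht10, ht1s, hnm, he1, hne1⟩ := ht1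
    obtain ⟨ht20, ht2s, -, he2, hne2⟩ := ht2
    have h1 : 0 < t1 := lt_trans h0 ht10
    have h2 : 0 < t2 := lt_trans h0 ht20
    rcases Nat.lt_or_ge n m with h | h
    · exact eq_of_two_pow_eq h h1 h2 he1 he2 hne1
    · have hmn : m < n := by omega
      have hne1' : ‖(PowerSeries.coeff m) x‖ * t1 ^ m ≠ 0 := by rwa [← he1]
      exact eq_of_two_pow_eq hmn h1 h2 he1.symm he2.symm hne1'
  have hcount : (⋃ p, Bad p).Countable :=
    Set.countable_iUnion fun p => (hsub p).countable
  have hI : ¬ (Set.Ioo t0 s).Countable := by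
    intro h
    have h2 : (Cardinal.mk (Set.Ioo t0 s)) ≤ Cardinal.aleph0 :=
      Cardinal.mk_le_aleph0_iff.mpr (Set.countable_coe_iff.mpr h)
    rw [Cardinal.mk_Ioo_real hts] at h2
    exact absurd h2 Cardinal.aleph0_lt_continuum.not_ge
  have hnss : ¬ (Set.Ioo t0 s ⊆ ⋃ p, Bad p) := fun hsubs =>
    hI (Set.Countable.mono hsubs hcount)
  obtain ⟨t, htIoo, htBad⟩ := Set.not_subset.mp hnss
  refine ⟨t, htIoo.1, htIoo.2, ?_⟩
  intro n m hnm heq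
  by_contra hne
  exact htBad (Set.mem_iUnion.mpr ⟨(n, m), htIoo.1, htIoo.2, hnm, heq, hne⟩)

end AuxLemmas

section MainLemmas

variable {K : Type} [NontriviallyNormedField K] [CharZero K]

set_option maxHeartbeats 2000000 in
/-- Key lemma: the constant coefficient dominates all Gauss-norm terms. -/
lemma star_lemma (hna : IsNonarchimedean fun x : K => ‖x‖)
    {r : ℝ} {x u : PowerSeries K}
    (hx : ∀ a : ℝ, 0 < a → a < r → ∃ C, Bnd a x C)
    (hu : ∀ a : ℝ, 0 < a → a < r → ∃ C, Bnd a u C)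
    (hde : dX x = u * x) :
    ∀ (n : ℕ), n ≠ 0 → ∀ t : ℝ, 0 < t → t < r →
      ‖(PowerSeries.coeff n) x‖ * t ^ n ≤ ‖(PowerSeries.coeff 0) x‖ := by
  by_contra hcon
  push_neg at hcon
  obtain ⟨n0, hn0, t0, ht00, ht0r, hbig⟩ := hcon
  have hs0 : (0:ℝ) < (t0 + r) / 2 := by linarith
  have ht0s : t0 < (t0 + r) / 2 := by linarith
  have hsr : (t0 + r) / 2 < r := by linarith
  set s := (t0 + r) / 2 with hs
  obtain ⟨Cx, hCx⟩ := hx s hs0 hsr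
  obtain ⟨t, htt0, hts, hgood⟩ := exists_good_t x ht00 ht0s
  have ht : (0:ℝ) < t := lt_trans ht00 htt0
  have htr : t < r := lt_trans hts hsr
  set d : ℕ → ℝ := fun j => ‖(PowerSeries.coeff j) x‖ * t ^ j with hdd
  have hd_nn : ∀ j, 0 ≤ d j := fun j => mul_nonneg (norm_nonneg _) (pow_pos ht j).le
  have hq0 : 0 ≤ t / s := by positivity
  have hq1 : t / s < 1 := (div_lt_one hs0).mpr hts
  have hdecay : ∀ j, d j ≤ Cx * (t / s) ^ j := fun j => term_decay hs0 hCx ht.le j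
  have hd2 : ‖(PowerSeries.coeff n0) x‖ * t0 ^ n0 ≤ d n0 :=
    mul_le_mul_of_nonneg_left (pow_le_pow_left₀ ht00.le htt0.le n0) (norm_nonneg _)
  have hdn0pos : 0 < d n0 :=
    lt_of_le_of_lt (norm_nonneg ((PowerSeries.coeff 0) x)) (lt_of_lt_of_le hbig hd2)
  have hd0lt : d 0 < d n0 := by
    have : d 0 = ‖(PowerSeries.coeff 0) x‖ := by simp [hdd]
    rw [this]
    exact lt_of_lt_of_le hbig hd2
  obtain ⟨N, hNall, hNgt⟩ := exists_argmax hq0 hq1 hdecay hdn0pos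
  have hA : 0 < d N := lt_of_lt_of_le hdn0pos (hNall n0)
  have hNne : N ≠ 0 := by
    intro h
    have := hNall n0
    rw [h] at this
    linarith
  have hxN : (PowerSeries.coeff N) x ≠ 0 := by
    intro h
    have : d N = 0 := by simp [hdd, h]
    linarith
  have hstrict : ∀ m, m ≠ N → d m < d N := by
    intro m hm
    rcases lt_or_eq_of_le (hNall m) with h | h
    · exact h
    · exfalso
      have h0 := hgood m N hm h
      have : d N = 0 := by rw [← h]; exact h0
      linarith
  -- the auxiliary series v with x^{(N)} = v * x
  set v := wSeq u N with hv
  have hgv : dX^[N] x = v * x := dX_iterate_eq_wSeq hde N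
  have hta' : t < (t + s) / 2 := by linarith
  have ha'0 : (0:ℝ) < (t + s) / 2 := by linarith
  have ha'r : (t + s) / 2 < r := by linarith
  set a' := (t + s) / 2 with ha'
  obtain ⟨Cv, hCv⟩ := wSeq_bnd hna hu N a' ha'0 ha'r
  set e : ℕ → ℝ := fun j => ‖(PowerSeries.coeff j) v‖ * t ^ j with hee
  have he_nn : ∀ j, 0 ≤ e j := fun j => mul_nonneg (norm_nonneg _) (pow_pos ht j).le
  have heq0 : 0 ≤ t / a' := by positivity
  have heq1 : t / a' < 1 := (div_lt_one ha'0).mpr hta'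
  have hedecay : ∀ j, e j ≤ Cv * (t / a') ^ j := fun j => term_decay ha'0 hCv ht.le j
  have hg0 : (PowerSeries.coeff 0) (dX^[N] x)
      = ((N.factorial : ℕ) : K) * (PowerSeries.coeff N) x := by
    have := coeff_dX_iterate x N 0
    rw [this]
    norm_num [Nat.descFactorial_self]
  have hg0ne : (PowerSeries.coeff 0) (dX^[N] x) ≠ 0 := by
    rw [hg0]
    exact mul_ne_zero (Nat.cast_ne_zero.mpr (Nat.factorial_ne_zero N)) hxN
  have hvne : ∃ j, (PowerSeries.coeff j) v ≠ 0 := by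
    by_contra h
    push_neg at h
    have hv0 : v = 0 := PowerSeries.ext fun n => by simpa using h n
    apply hg0ne
    rw [hgv, hv0, zero_mul, map_zero]
  obtain ⟨j1', hj1'⟩ := hvne
  have hej1 : 0 < e j1' := mul_pos (norm_pos_iff.mpr hj1') (pow_pos ht j1')
  obtain ⟨J, hJall, hJgt⟩ := exists_argmax heq0 heq1 hedecay hej1
  have hB : 0 < e J := lt_of_lt_of_le hej1 (hJall j1')
  have hNfac : (0:ℝ) < ‖((N.factorial : ℕ) : K)‖ :=
    norm_pos_iff.mpr (Nat.cast_ne_zero.mpr (Nat.factorial_ne_zero N))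
  have htN : (0:ℝ) < t ^ N := pow_pos ht N
  -- claim 1 : strict dominance of the constant coefficient of dX^[N] x
  have claim1 : ∀ m : ℕ, m ≠ 0 →
      ‖(PowerSeries.coeff m) (dX^[N] x)‖ * t ^ m
        < ‖(PowerSeries.coeff 0) (dX^[N] x)‖ := by
    intro m hm
    rw [coeff_dX_iterate x N m, hg0, norm_mul, norm_mul]
    have h1 : ‖(((m + N).descFactorial N : ℕ) : K)‖ ≤ ‖((N.factorial : ℕ) : K)‖ :=
      norm_descFactorial_le hna m N
    have h2 : d (m + N) < d N := hstrict (m + N) (by omega)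
    have key : ‖(PowerSeries.coeff (m + N)) x‖ * t ^ m < ‖(PowerSeries.coeff N) x‖ := by
      have h3 : (‖(PowerSeries.coeff (m + N)) x‖ * t ^ m) * t ^ N
          < ‖(PowerSeries.coeff N) x‖ * t ^ N := by
        calc (‖(PowerSeries.coeff (m + N)) x‖ * t ^ m) * t ^ N
            = ‖(PowerSeries.coeff (m + N)) x‖ * t ^ (m + N) := by
              rw [pow_add]; ring
          _ < ‖(PowerSeries.coeff N) x‖ * t ^ N := h2
      exact lt_of_mul_lt_mul_right h3 htN.le
    calc ‖(((m + N).descFactorial N : ℕ) : K)‖ * ‖(PowerSeries.coeff (m + N)) x‖ * t ^ m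
        ≤ ‖((N.factorial : ℕ) : K)‖ * (‖(PowerSeries.coeff (m + N)) x‖ * t ^ m) := by
          rw [mul_assoc]
          exact mul_le_mul_of_nonneg_right h1
            (mul_nonneg (norm_nonneg _) (pow_pos ht m).le)
      _ < ‖((N.factorial : ℕ) : K)‖ * ‖(PowerSeries.coeff N) x‖ :=
          (mul_lt_mul_iff_right₀ hNfac).mpr key
  -- claim 2 : product lower bound at index mstar
  set mstar := J + N with hmstar
  have hm0 : mstar ≠ 0 := by omega
  have hsplit : ∀ i j : ℕ, i + j = mstar →
      e i * d j = ‖(PowerSeries.coeff i) v‖ * ‖(PowerSeries.coeff j) x‖ * t ^ mstar := by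
    intro i j hij
    simp only [hee, hdd]
    rw [← hij, pow_add]
    ring
  have htm : (0:ℝ) < t ^ mstar := pow_pos ht _
  have hterm_lt : ∀ p ∈ (Finset.HasAntidiagonal.antidiagonal mstar).erase (J, N),
      ‖(PowerSeries.coeff p.1) v * (PowerSeries.coeff p.2) x‖
        < e J * d N / t ^ mstar := by
    rintro ⟨i, j⟩ hp
    rw [Finset.mem_erase, Finset.HasAntidiagonal.mem_antidiagonal] at hp
    obtain ⟨hpne, hij⟩ := hp
    rw [norm_mul, lt_div_iff₀ htm, ← hsplit i j hij]
    rcases lt_trichotomy i J with h | h | h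
    · have h2 : d j < d N := hstrict j (by omega)
      have h1 : e i ≤ e J := hJall i
      nlinarith [he_nn i, hd_nn j, hB, hA]
    · exfalso
      apply hpne
      have : j = N := by omega
      rw [h, this]
    · have h1 : e i < e J := hJgt i h
      have h2 : d j ≤ d N := hNall j
      nlinarith [he_nn i, hd_nn j, hB, hA]
  have hrest : ‖∑ p ∈ (Finset.HasAntidiagonal.antidiagonal mstar).erase (J, N),
      (PowerSeries.coeff p.1) v * (PowerSeries.coeff p.2) x‖
        < e J * d N / t ^ mstar :=
    na_sum_lt hna _ _ (div_pos (mul_pos hB hA) htm) hterm_lt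
  have hmainterm : ‖(PowerSeries.coeff J) v * (PowerSeries.coeff N) x‖
      = e J * d N / t ^ mstar := by
    rw [norm_mul, eq_div_iff htm.ne']
    exact (hsplit J N rfl).symm
  have hcoeff : (PowerSeries.coeff mstar) (v * x)
      = (PowerSeries.coeff J) v * (PowerSeries.coeff N) x
        + ∑ p ∈ (Finset.HasAntidiagonal.antidiagonal mstar).erase (J, N),
            (PowerSeries.coeff p.1) v * (PowerSeries.coeff p.2) x := by
    rw [PowerSeries.coeff_mul]
    exact (Finset.add_sum_erase (Finset.HasAntidiagonal.antidiagonal mstar)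
      (fun p : ℕ × ℕ => (PowerSeries.coeff p.1) v * (PowerSeries.coeff p.2) x)
      (show ((J, N) : ℕ × ℕ) ∈ Finset.HasAntidiagonal.antidiagonal mstar from
        Finset.HasAntidiagonal.mem_antidiagonal.mpr hmstar.symm)).symm
  have hge : e J * d N / t ^ mstar ≤ ‖(PowerSeries.coeff mstar) (v * x)‖ := by
    rw [hcoeff, ← hmainterm]
    apply na_norm_add_ge hna
    rw [hmainterm]
    exact hrest
  -- claim 3 : upper bound for the constant coefficient
  have hc3 : ‖(PowerSeries.coeff 0) (v * x)‖ ≤ e J * d N := by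
    have hc : (PowerSeries.coeff 0) (v * x)
        = (PowerSeries.coeff 0) v * (PowerSeries.coeff 0) x := by
      rw [PowerSeries.coeff_mul, Finset.Nat.antidiagonal_zero, Finset.sum_singleton]
    rw [hc, norm_mul]
    have h1 : ‖(PowerSeries.coeff 0) v‖ ≤ e J := by
      have := hJall 0
      simpa [hee] using this
    have h2 : ‖(PowerSeries.coeff 0) x‖ ≤ d N := by
      have := hNall 0
      simpa [hdd] using this
    exact mul_le_mul h1 h2 (norm_nonneg _) hB.le
  -- contradiction
  have hlt := claim1 mstar hm0
  rw [hgv] at hlt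
  have hge' : e J * d N ≤ ‖(PowerSeries.coeff mstar) (v * x)‖ * t ^ mstar :=
    (div_le_iff₀ htm).mp hge
  linarith

set_option maxHeartbeats 1000000 in
/-- Existence and bound for the inverse. -/
lemma inverse_bound (hna : IsNonarchimedean fun x : K => ‖x‖)
    {r : ℝ} {x u : PowerSeries K}
    (hx : ∀ a : ℝ, 0 < a → a < r → ∃ C, Bnd a x C)
    (hu : ∀ a : ℝ, 0 < a → a < r → ∃ C, Bnd a u C)
    (hde : dX x = u * x) (hxne : x ≠ 0) :
    x * x⁻¹ = 1 ∧ x⁻¹ * x = 1 ∧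
      ∀ (i : ℕ) (t : ℝ), 0 < t → t < r →
        ‖(PowerSeries.coeff i) x⁻¹‖ * t ^ i ≤ ‖(PowerSeries.coeff 0) x‖⁻¹ := by
  have hx0 : (PowerSeries.coeff 0) x ≠ 0 := const_coeff_ne_zero hde hxne
  have hx0' : PowerSeries.constantCoeff x ≠ 0 := by
    rwa [PowerSeries.coeff_zero_eq_constantCoeff] at hx0
  have hx0pos : 0 < ‖(PowerSeries.coeff 0) x‖ := norm_pos_iff.mpr hx0
  refine ⟨PowerSeries.mul_inv_cancel x hx0', PowerSeries.inv_mul_cancel x hx0', ?_⟩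
  intro i
  induction i using Nat.strong_induction_on with
  | _ i ih =>
    intro t ht htr
    rcases Nat.eq_zero_or_pos i with hi | hi
    · subst hi
      rw [pow_zero, mul_one]
      have hz0 : (PowerSeries.coeff 0) x⁻¹ = ((PowerSeries.coeff 0) x)⁻¹ := by
        rw [PowerSeries.coeff_zero_eq_constantCoeff]
        exact PowerSeries.constantCoeff_inv x
      rw [hz0, norm_inv]
    · have hine : i ≠ 0 := by omega
      have hco : (PowerSeries.coeff i) (x * x⁻¹) = 0 := by
        rw [PowerSeries.mul_inv_cancel x hx0', PowerSeries.coeff_one, if_neg hine]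
      rw [PowerSeries.coeff_mul] at hco
      have hmem : ((0:ℕ), i) ∈ Finset.HasAntidiagonal.antidiagonal i := Finset.HasAntidiagonal.mem_antidiagonal.mpr (by omega)
      have hsum := Finset.add_sum_erase (Finset.HasAntidiagonal.antidiagonal i)
        (fun p : ℕ × ℕ => (PowerSeries.coeff p.1) x * (PowerSeries.coeff p.2) x⁻¹) hmem
      have hkey : (PowerSeries.coeff 0) x * (PowerSeries.coeff i) x⁻¹
          = -∑ p ∈ (Finset.HasAntidiagonal.antidiagonal i).erase (0, i),
              (PowerSeries.coeff p.1) x * (PowerSeries.coeff p.2) x⁻¹ :=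
        eq_neg_of_add_eq_zero_left (hsum.trans hco)
      have hstar := star_lemma hna hx hu hde
      have hti : (0:ℝ) < t ^ i := pow_pos ht i
      have hnorm : ‖(PowerSeries.coeff 0) x‖ * ‖(PowerSeries.coeff i) x⁻¹‖
          ≤ (‖(PowerSeries.coeff 0) x‖ * ‖(PowerSeries.coeff 0) x‖⁻¹) / t ^ i := by
        rw [← norm_mul, hkey, norm_neg]
        apply na_sum_le hna
        · positivity
        · rintro ⟨a, b⟩ hp
          rw [Finset.mem_erase, Finset.HasAntidiagonal.mem_antidiagonal] at hp
          obtain ⟨hpne, hab⟩ := hp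
          have ha : a ≠ 0 := by
            intro h
            apply hpne
            have : b = i := by omega
            rw [h, this]
          have hb : b < i := by omega
          rw [norm_mul]
          have h1 : ‖(PowerSeries.coeff a) x‖ ≤ ‖(PowerSeries.coeff 0) x‖ / t ^ a := by
            rw [le_div_iff₀ (pow_pos ht a)]
            exact hstar a ha t ht htr
          have h2 : ‖(PowerSeries.coeff b) x⁻¹‖ ≤ ‖(PowerSeries.coeff 0) x‖⁻¹ / t ^ b := by
            rw [le_div_iff₀ (pow_pos ht b)]
            exact ih b hb t ht htr
          calc ‖(PowerSeries.coeff a) x‖ * ‖(PowerSeries.coeff b) x⁻¹‖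
              ≤ (‖(PowerSeries.coeff 0) x‖ / t ^ a) * (‖(PowerSeries.coeff 0) x‖⁻¹ / t ^ b) :=
                mul_le_mul h1 h2 (norm_nonneg _) (by positivity)
            _ = (‖(PowerSeries.coeff 0) x‖ * ‖(PowerSeries.coeff 0) x‖⁻¹) / t ^ i := by
                rw [div_mul_div_comm, ← pow_add, hab]
      rw [mul_inv_cancel₀ hx0pos.ne'] at hnorm
      have h4 : ‖(PowerSeries.coeff 0) x‖ * (‖(PowerSeries.coeff i) x⁻¹‖ * t ^ i) ≤ 1 := by
        have := mul_le_mul_of_nonneg_right hnorm hti.le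
        rw [one_div, inv_mul_cancel₀ hti.ne'] at this
        calc ‖(PowerSeries.coeff 0) x‖ * (‖(PowerSeries.coeff i) x⁻¹‖ * t ^ i)
            = ‖(PowerSeries.coeff 0) x‖ * ‖(PowerSeries.coeff i) x⁻¹‖ * t ^ i := by ring
          _ ≤ 1 := this
      have h5 : ‖(PowerSeries.coeff i) x⁻¹‖ * t ^ i ≤ ‖(PowerSeries.coeff 0) x‖⁻¹ := by
        rw [← one_div, le_div_iff₀ hx0pos]
        calc ‖(PowerSeries.coeff i) x⁻¹‖ * t ^ i * ‖(PowerSeries.coeff 0) x‖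
            = ‖(PowerSeries.coeff 0) x‖ * (‖(PowerSeries.coeff i) x⁻¹‖ * t ^ i) := by ring
          _ ≤ 1 := h4
      exact h5

lemma le_of_forall_lt_radius {a C r : ℝ} (hr : 0 < r) {i : ℕ}
    (h : ∀ t : ℝ, 0 < t → t < r → a * t ^ i ≤ C) : a * r ^ i ≤ C := by
  have htend : Filter.Tendsto (fun t : ℝ => a * t ^ i)
      (nhdsWithin r (Set.Iio r)) (nhds (a * r ^ i)) :=
    Filter.Tendsto.mono_left ((continuous_const.mul (continuous_pow i)).tendsto r)
      nhdsWithin_le_nhds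
  refine le_of_tendsto htend ?_
  filter_upwards [Ioo_mem_nhdsLT_of_mem (Set.mem_Ioc.mpr ⟨hr, le_refl r⟩)] with t htt
  exact h t htt.1 htt.2

end MainLemmas

/-- A solution of a rank-one differential equation `∂_X(x) = u·x` in
`K{X/r}` (resp. `K[[X/r]]₀`) is zero or a unit of that ring. -/
theorem rank_one_solution_zero_or_unit
    (K : Type) [NontriviallyNormedField K] [CompleteSpace K] [CharZero K]
    (hna : IsNonarchimedean fun x : K => ‖x‖)
    (r : ℝ) (hr : 0 < r) :
    (∀ x u : PowerSeries K, x ∈ convRing K r → u ∈ convRing K r → dX x = u * x →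
        x = 0 ∨ UnitIn (convRing K r) x) ∧
      ∀ x u : PowerSeries K, x ∈ bdRing K r → u ∈ bdRing K r → dX x = u * x →
        x = 0 ∨ UnitIn (bdRing K r) x := by
  constructor
  · intro x u hxc huc hde
    by_cases hxz : x = 0
    · exact Or.inl hxz
    · right
      have hx : ∀ a : ℝ, 0 < a → a < r → ∃ C, Bnd a x C :=
        fun a ha har => memBd_iff.mp (hxc a ha har)
      have hu' : ∀ a : ℝ, 0 < a → a < r → ∃ C, Bnd a u C :=
        fun a ha har => memBd_iff.mp (huc a ha har)
      obtain ⟨h1, h2, h3⟩ := inverse_bound hna hx hu' hde hxz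
      refine ⟨hxc, x⁻¹, ?_, h1, h2⟩
      intro a ha har
      exact memBd_iff.mpr ⟨_, fun i => h3 i a ha har⟩
  · intro x u hxb hub hde
    by_cases hxz : x = 0
    · exact Or.inl hxz
    · right
      obtain ⟨Cx, hCx⟩ := memBd_iff.mp hxb
      obtain ⟨Cu, hCu⟩ := memBd_iff.mp hub
      have hx : ∀ a : ℝ, 0 < a → a < r → ∃ C, Bnd a x C :=
        fun a ha har => ⟨Cx, hCx.mono ha.le har.le⟩
      have hu' : ∀ a : ℝ, 0 < a → a < r → ∃ C, Bnd a u C :=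
        fun a ha har => ⟨Cu, hCu.mono ha.le har.le⟩
      obtain ⟨h1, h2, h3⟩ := inverse_bound hna hx hu' hde hxz
      refine ⟨hxb, x⁻¹, ?_, h1, h2⟩
      apply memBd_iff.mpr
      refine ⟨‖(PowerSeries.coeff 0) x‖⁻¹, fun i => ?_⟩
      exact le_of_forall_lt_radius hr (fun t ht htr => h3 i t ht htr)

end Ohkubo
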